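/- Let (Γ, I) be an independence alphabet, η : M(Γ, I) → Q an embedding into the queue monoid, a ∈ Γ with π(η(a)) ≠ ε and π̄(η(a)) = ε (or symmetrically π(η(a)) = ε and π̄(η(a)) ≠ ε), and b, c ∈ Γ with (b, c) ∈ I. Then (a, b) ∈ I or (a, c) ∈ I. -/

import Mathlib

def qstep (A : Type) [DecidableEq A] : Option (List A) → A ⊕ A → Option (List A)
  | none, _ => none
  | some q, Sum.inl a => some (q ++ [a])
  | some q, Sum.inr a =>
      match q with
      | [] => none
      | b :: q' => if b = a then some q' else none

def qact (A : Type) [DecidableEq A] (q : Option (List A)) (u : List (A ⊕ A)) :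
    Option (List A) :=
  u.foldl (qstep A) q

def QEquiv (A : Type) [DecidableEq A] (u v : List (A ⊕ A)) : Prop :=
  ∀ q : Option (List A), qact A q u = qact A q v

/-- The congruence on the free monoid of queue actions identifying sequences with the
same effect on every queue state. -/
def queueCon (A : Type) [DecidableEq A] : Con (FreeMonoid (A ⊕ A)) where
  r u v := QEquiv A u.toList v.toList
  iseqv := ⟨fun _ _ => rfl, fun h q => (h q).symm, fun h1 h2 q => (h1 q).trans (h2 q)⟩
  mul' := by
    intro u v u' v' hu hv q
    have h1 := hu q
    have h2 := hv (qact A q v.toList)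
    show qact A q (u * u').toList = qact A q (v * v').toList
    rw [FreeMonoid.toList_mul, FreeMonoid.toList_mul]
    unfold qact at h1 h2 ⊢
    rw [List.foldl_append, List.foldl_append, h1, h2]

/-- The queue monoid over the alphabet `A`. -/
abbrev QueueMonoid (A : Type) [DecidableEq A] := (queueCon A).Quotient

/-- The congruence on the free monoid generated by `ab = ba` for independent `(a,b)`. -/
def traceCon {Γ : Type} (I : Γ → Γ → Prop) : Con (FreeMonoid Γ) :=
  conGen fun u v => ∃ a b : Γ, I a b ∧
    u = FreeMonoid.of a * FreeMonoid.of b ∧ v = FreeMonoid.of b * FreeMonoid.of a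

/-- The trace monoid of the independence alphabet `(Γ, I)`. -/
abbrev TraceMonoid {Γ : Type} (I : Γ → Γ → Prop) := (traceCon I).Quotient

/-- Positive projection: erase all read actions. -/
def ppr {A : Type} (u : List (A ⊕ A)) : List A :=
  u.filterMap (Sum.elim some fun _ => none)

/-- Negative projection: erase all write actions (mapping ā to a). -/
def npr {A : Type} (u : List (A ⊕ A)) : List A :=
  u.filterMap (Sum.elim (fun _ => none) some)

/-- `a ∈ Γ₊`: some (equivalently, every) representative of `η(a)` has nonempty positive
projection and empty negative projection. -/
def GammaPlus {Γ A : Type} [DecidableEq A] (I : Γ → Γ → Prop)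
    (η : TraceMonoid I →* QueueMonoid A) (a : Γ) : Prop :=
  ∃ w : List (A ⊕ A),
    (queueCon A).mk' (FreeMonoid.ofList w) = η ((traceCon I).mk' (FreeMonoid.of a)) ∧
    ppr w ≠ [] ∧ npr w = []

/-- `a ∈ Γ₋`: some representative of `η(a)` has empty positive projection and nonempty
negative projection. -/
def GammaMinus {Γ A : Type} [DecidableEq A] (I : Γ → Γ → Prop)
    (η : TraceMonoid I →* QueueMonoid A) (a : Γ) : Prop :=
  ∃ w : List (A ⊕ A),
    (queueCon A).mk' (FreeMonoid.ofList w) = η ((traceCon I).mk' (FreeMonoid.of a)) ∧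
    ppr w = [] ∧ npr w ≠ []

/-- `a ∈ Γ±`: some representative of `η(a)` has both projections nonempty. -/
def GammaPM {Γ A : Type} [DecidableEq A] (I : Γ → Γ → Prop)
    (η : TraceMonoid I →* QueueMonoid A) (a : Γ) : Prop :=
  ∃ w : List (A ⊕ A),
    (queueCon A).mk' (FreeMonoid.ofList w) = η ((traceCon I).mk' (FreeMonoid.of a)) ∧
    ppr w ≠ [] ∧ npr w ≠ []

-- ## auxiliary development
-- ## list powers
def lpow {α : Type} (l : List α) : ℕ → List α
  | 0 => []
  | n + 1 => l ++ lpow l n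

lemma lpow_nil {α : Type} (n : ℕ) : lpow ([] : List α) n = [] := by
  induction n with
  | zero => rfl
  | succ n ih => simp [lpow, ih]

lemma lpow_length {α : Type} (l : List α) (n : ℕ) : (lpow l n).length = n * l.length := by
  induction n with
  | zero => simp [lpow]
  | succ n ih => simp [lpow, ih]; ring

lemma lpow_add {α : Type} (l : List α) (m n : ℕ) :
    lpow l (m + n) = lpow l m ++ lpow l n := by
  induction m with
  | zero => simp [lpow]
  | succ m ih => simp only [Nat.succ_add, lpow, ih, List.append_assoc]

lemma lpow_succ' {α : Type} (l : List α) (n : ℕ) : lpow l (n + 1) = lpow l n ++ l := by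
  rw [lpow_add]; simp [lpow]

lemma comm_lpow {α : Type} {s t : List α} (h : s ++ t = t ++ s) (n : ℕ) :
    s ++ lpow t n = lpow t n ++ s := by
  induction n with
  | zero => simp [lpow]
  | succ n ih =>
    simp only [lpow, ← List.append_assoc, h]
    simp only [List.append_assoc, ih]

lemma lpow_comm {α : Type} {s t : List α} (h : s ++ t = t ++ s) (m n : ℕ) :
    lpow s m ++ lpow t n = lpow t n ++ lpow s m := by
  induction m with
  | zero => simp [lpow]
  | succ m ih =>
    simp only [lpow, List.append_assoc, ih]
    simp only [← List.append_assoc, comm_lpow h]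

lemma lpow_append {α : Type} {s t : List α} (h : s ++ t = t ++ s) (n : ℕ) :
    lpow (s ++ t) n = lpow s n ++ lpow t n := by
  induction n with
  | zero => simp [lpow]
  | succ n ih =>
    simp only [lpow, ih, List.append_assoc]
    congr 1
    simp only [← List.append_assoc]
    congr 1
    exact comm_lpow h.symm n

lemma lpow_pow_length {α : Type} : ∀ (k : ℕ) (s t : List α), s.length + t.length ≤ k →
    s ++ t = t ++ s → lpow s t.length = lpow t s.length := by
  intro k
  induction k with
  | zero =>
    intro s t hk _
    have hs : s = [] := List.eq_nil_of_length_eq_zero (by omega)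
    have ht : t = [] := List.eq_nil_of_length_eq_zero (by omega)
    subst hs; subst ht; rfl
  | succ k ih =>
    intro s t hk h
    rcases eq_or_ne s [] with rfl | hs
    · simp [lpow_nil, lpow]
    rcases eq_or_ne t [] with rfl | ht
    · simp [lpow_nil, lpow]
    -- wlog s.length ≤ t.length
    rcases le_total s.length t.length with hle | hle
    · -- t = s ++ t'
      have hpref : s = t.take s.length := by
        have : s = (s ++ t).take s.length := by simp
        rw [h] at this
        rwa [List.take_append_of_le_length hle] at this
      set t' := t.drop s.length with ht'
      have htdec : t = s ++ t' := by
        rw [hpref, ht']; exact (List.take_append_drop _ t).symm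
      have hcomm' : s ++ t' = t' ++ s := by
        have : s ++ (s ++ t') = (s ++ t') ++ s := by rw [← htdec]; exact h
        simpa [List.append_assoc] using this
      have hslen : 0 < s.length := List.length_pos_iff.2 hs
      have hlen' : s.length + t'.length ≤ k := by
        have : t.length = s.length + t'.length := by
          rw [htdec]; simp
        omega
      have ihr := ih s t' hlen' hcomm'
      have h2 : t.length = s.length + t'.length := by rw [htdec]; simp
      rw [h2, lpow_add, ihr, htdec]
      rw [lpow_append hcomm']
    · -- symmetric
      have hpref : t = s.take t.length := by
        have : t = (t ++ s).take t.length := by simp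
        rw [← h] at this
        rwa [List.take_append_of_le_length hle] at this
      set s' := s.drop t.length with hs'
      have hsdec : s = t ++ s' := by
        rw [hpref, hs']; exact (List.take_append_drop _ s).symm
      have hcomm' : t ++ s' = s' ++ t := by
        have : t ++ (t ++ s') = (t ++ s') ++ t := by rw [← hsdec]; exact h.symm
        simpa [List.append_assoc] using this
      have htlen : 0 < t.length := List.length_pos_iff.2 ht
      have hlen' : t.length + s'.length ≤ k := by
        have : s.length = t.length + s'.length := by rw [hsdec]; simp
        omega
      have ihr := ih t s' hlen' hcomm'
      have h2 : s.length = t.length + s'.length := by rw [hsdec]; simp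
      rw [h2, lpow_add, ihr, hsdec]
      rw [lpow_append hcomm']

lemma comm_lpow_length {α : Type} {s t : List α} (h : s ++ t = t ++ s) :
    lpow s t.length = lpow t s.length :=
  lpow_pow_length (s.length + t.length) s t le_rfl h

lemma lpow_replicate {α : Type} (x : α) (n : ℕ) : lpow [x] n = List.replicate n x := by
  induction n with
  | zero => rfl
  | succ n ih => simp [lpow, ih, List.replicate_succ]

-- ## projections
lemma ppr_append {A : Type} (u v : List (A ⊕ A)) : ppr (u ++ v) = ppr u ++ ppr v :=
  List.filterMap_append ..

lemma npr_append {A : Type} (u v : List (A ⊕ A)) : npr (u ++ v) = npr u ++ npr v :=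
  List.filterMap_append ..

lemma ppr_lpow {A : Type} (u : List (A ⊕ A)) (n : ℕ) : ppr (lpow u n) = lpow (ppr u) n := by
  induction n with
  | zero => rfl
  | succ n ih => simp [lpow, ppr_append, ih]

lemma npr_lpow {A : Type} (u : List (A ⊕ A)) (n : ℕ) : npr (lpow u n) = lpow (npr u) n := by
  induction n with
  | zero => rfl
  | succ n ih => simp [lpow, npr_append, ih]

lemma ppr_cons_inl {A : Type} (x : A) (u : List (A ⊕ A)) :
    ppr (Sum.inl x :: u) = x :: ppr u := rfl
lemma ppr_cons_inr {A : Type} (x : A) (u : List (A ⊕ A)) :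
    ppr (Sum.inr x :: u) = ppr u := rfl
lemma npr_cons_inl {A : Type} (x : A) (u : List (A ⊕ A)) :
    npr (Sum.inl x :: u) = npr u := rfl
lemma npr_cons_inr {A : Type} (x : A) (u : List (A ⊕ A)) :
    npr (Sum.inr x :: u) = x :: npr u := rfl
-- ## the d-value
def dAux (A : Type) : ℕ → ℕ → List (A ⊕ A) → ℕ
  | _, _, [] => 0
  | W, R, Sum.inl _ :: u => dAux A (W + 1) R u
  | W, R, Sum.inr _ :: u => max (R + 1 - W) (dAux A W (R + 1) u)

def dval (A : Type) (u : List (A ⊕ A)) : ℕ := dAux A 0 0 u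

lemma dAux_append (A : Type) :
    ∀ (u v : List (A ⊕ A)) (W R : ℕ), dAux A W R (u ++ v) =
      max (dAux A W R u) (dAux A (W + (ppr u).length) (R + (npr u).length) v) := by
  intro u
  induction u with
  | nil => intro v W R; simp [dAux, ppr, npr]
  | cons e u ih =>
    intro v W R
    cases e with
    | inl x =>
      simp only [List.cons_append, dAux, ppr_cons_inl, npr_cons_inl, List.length_cons]
      have happ : u.append v = u ++ v := rfl
      rw [ih v (W + 1) R]
      have e1 : W + 1 + (ppr u).length = W + ((ppr u).length + 1) := by omega
      rw [e1]
    | inr x =>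
      simp only [List.cons_append, dAux, ppr_cons_inr, npr_cons_inr, List.length_cons]
      have happ : u.append v = u ++ v := rfl
      rw [ih v W (R + 1)]
      have e1 : R + 1 + (npr u).length = R + ((npr u).length + 1) := by omega
      rw [e1, ← Nat.max_assoc]

lemma dval_append (A : Type) (u v : List (A ⊕ A)) :
    dval A (u ++ v) = max (dval A u) (dAux A (ppr u).length (npr u).length v) := by
  have := dAux_append A u v 0 0
  simpa [dval] using this

lemma dAux_le (A : Type) : ∀ (u : List (A ⊕ A)) (W R : ℕ),
    dAux A W R u ≤ R + (npr u).length - W := by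
  intro u
  induction u with
  | nil => intro W R; simp [dAux]
  | cons e u ih =>
    intro W R
    cases e with
    | inl x =>
      simp only [dAux, ppr_cons_inl, npr_cons_inl]
      calc dAux A (W+1) R u ≤ R + (npr u).length - (W+1) := ih (W+1) R
        _ ≤ R + (npr u).length - W := by omega
    | inr x =>
      simp only [dAux, npr_cons_inr, List.length_cons]
      have := ih W (R+1)
      omega

lemma dval_le_npr (A : Type) (u : List (A ⊕ A)) : dval A u ≤ (npr u).length := by
  have := dAux_le A u 0 0
  simpa [dval] using this

lemma npr_le_dval (A : Type) (u : List (A ⊕ A)) :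
    (npr u).length ≤ dval A u + (ppr u).length := by
  induction u using List.reverseRecOn with
  | nil => simp [npr, dval, dAux]
  | append_singleton u e ih =>
    cases e with
    | inl x =>
      rw [npr_append, ppr_append, dval_append]
      have h1 : (npr [(Sum.inl x : A ⊕ A)]) = [] := rfl
      have h2 : (ppr [(Sum.inl x : A ⊕ A)]) = [x] := rfl
      rw [h1, h2]
      simp only [List.append_nil, List.length_append, List.length_cons, List.length_nil]
      have hle : dval A u ≤ max (dval A u) (dAux A (ppr u).length (npr u).length [Sum.inl x]) :=
        le_max_left _ _
      omega
    | inr x =>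
      rw [npr_append, ppr_append, dval_append]
      simp only [dAux, List.length_append]
      have h1 : (npr [Sum.inr x]).length = 1 := rfl
      have h2 : (ppr [(Sum.inr x : A ⊕ A)]).length = 0 := rfl
      rw [h1, h2]
      have : (npr u).length + 1 - (ppr u).length ≤
          max (dval A u) (max ((npr u).length + 1 - (ppr u).length) (dAux A (ppr u).length ((npr u).length + 1) [])) := by
        simp [dAux]
      omega

lemma qact_none (A : Type) [DecidableEq A] (u : List (A ⊕ A)) : qact A none u = none := by
  induction u with
  | nil => rfl
  | cons e u ih =>
    show qact A (qstep A none e) u = none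
    have : qstep A none e = none := rfl
    rw [this]; exact ih

lemma qact_append (A : Type) [DecidableEq A] (q : Option (List A)) (u v : List (A ⊕ A)) :
    qact A q (u ++ v) = qact A (qact A q u) v :=
  List.foldl_append ..

def stdAct (A : Type) [DecidableEq A] (r s : List A) (d : ℕ) (q : List A) : Option (List A) :=
  if d ≤ q.length ∧ r = (q ++ s).take r.length then some ((q ++ s).drop r.length) else none

theorem qact_eq (A : Type) [DecidableEq A] (u : List (A ⊕ A)) (q : List A) :
    qact A (some q) u = stdAct A (npr u) (ppr u) (dval A u) q := by
  induction u using List.reverseRecOn generalizing q with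
  | nil => simp [qact, stdAct, npr, ppr, dval, dAux]
  | append_singleton u e ih =>
    rw [qact_append]
    rw [ih q]
    cases e with
    | inl x =>
      -- write
      have hnpr : npr (u ++ [Sum.inl x]) = npr u := by
        rw [npr_append]; simp [npr]
      have hppr : ppr (u ++ [Sum.inl x]) = ppr u ++ [x] := by
        rw [ppr_append]; rfl
      have hd : dval A (u ++ [Sum.inl x]) = dval A u := by
        rw [dval_append]; simp [dAux]
      rw [hnpr, hppr, hd]
      set r := npr u with hr
      set s := ppr u with hs
      set d := dval A u with hdv
      by_cases hc : d ≤ q.length ∧ r = (q ++ s).take r.length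
      · have hlen : r.length ≤ (q ++ s).length := by
          have h1 := npr_le_dval A u
          simp only [← hr, ← hs, ← hdv] at h1
          simp only [List.length_append]
          omega
        rw [stdAct.eq_1, if_pos hc]
        have hc2 : d ≤ q.length ∧ r = (q ++ (s ++ [x])).take r.length := by
          refine ⟨hc.1, ?_⟩
          rw [← List.append_assoc, List.take_append_of_le_length hlen]
          exact hc.2
        rw [stdAct.eq_1, if_pos hc2]
        show some ((q ++ s).drop r.length ++ [x]) = _
        rw [← List.append_assoc, List.drop_append_of_le_length hlen]
      · rw [stdAct.eq_1, if_neg hc]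
        have hc2 : ¬ (d ≤ q.length ∧ r = (q ++ (s ++ [x])).take r.length) := by
          intro h2
          apply hc
          refine ⟨h2.1, ?_⟩
          have hlen : r.length ≤ (q ++ s).length := by
            have h1 := npr_le_dval A u
            simp only [← hr, ← hs, ← hdv] at h1
            simp only [List.length_append]
            omega
          rw [← List.append_assoc, List.take_append_of_le_length hlen] at h2
          exact h2.2
        rw [stdAct.eq_1, if_neg hc2]
        rfl
    | inr x =>
      -- read
      have hnpr : npr (u ++ [Sum.inr x]) = npr u ++ [x] := by
        rw [npr_append]; rfl
      have hppr : ppr (u ++ [Sum.inr x]) = ppr u := by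
        rw [ppr_append]; simp [ppr]
      have hd : dval A (u ++ [Sum.inr x]) =
          max (dval A u) ((npr u).length + 1 - (ppr u).length) := by
        rw [dval_append]; simp [dAux]
      rw [hnpr, hppr, hd]
      set r := npr u with hr
      set s := ppr u with hs
      set d := dval A u with hdv
      set L := q ++ s with hL
      have hlen2 : (r ++ [x]).length = r.length + 1 := by simp
      by_cases hc : d ≤ q.length ∧ r = L.take r.length
      · rw [stdAct.eq_1, if_pos hc]
        rcases hdrop : L.drop r.length with _ | ⟨b, t⟩
        · -- queue empty after prior reads
          have hlenL : L.length ≤ r.length := by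
            have hle := congrArg List.length hdrop
            simp at hle
            omega
          show none = _
          rw [stdAct.eq_1, if_neg]
          rintro ⟨h1, -⟩
          have h2 : r.length + 1 - s.length ≤ q.length := le_trans (le_max_right _ _) h1
          have hql : L.length = q.length + s.length := by rw [hL]; simp
          omega
        · -- queue nonempty with head b
          have hlt : r.length < L.length := by
            have hle := congrArg List.length hdrop
            simp at hle
            omega
          have h' := hdrop.symm.trans (List.drop_eq_getElem_cons hlt)
          injection h' with hb ht
          have htake : L.take (r.length + 1) = L.take r.length ++ [b] := by
            rw [List.take_succ, List.getElem?_eq_getElem hlt, ← hb]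
            rfl
          show (if b = x then some t else none) = _
          by_cases hbx : b = x
          · rw [if_pos hbx]
            have hcond : max d (r.length + 1 - s.length) ≤ q.length ∧
                r ++ [x] = (q ++ s).take (r ++ [x]).length := by
              constructor
              · refine max_le hc.1 ?_
                have hql : L.length = q.length + s.length := by rw [hL]; simp
                omega
              · rw [hlen2, ← hL, htake, ← hc.2, hbx]
            rw [stdAct.eq_1, if_pos hcond, ht, ← hL, hlen2]
          · rw [if_neg hbx, stdAct.eq_1, if_neg]
            rintro ⟨-, h2⟩
            apply hbx
            rw [hlen2, ← hL, htake, ← hc.2] at h2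
            have h3 := List.append_cancel_left h2
            injection h3 with h4
            exact h4.symm
      · rw [stdAct.eq_1, if_neg hc]
        show none = _
        rw [stdAct.eq_1, if_neg]
        rintro ⟨h1, h2⟩
        apply hc
        refine ⟨le_trans (le_max_left _ _) h1, ?_⟩
        rw [hlen2] at h2
        have h3 := congrArg (List.take r.length) h2
        rw [List.take_append_of_le_length le_rfl, List.take_take] at h3
        have hmin : min r.length (r.length + 1) = r.length := by omega
        rw [hmin, List.take_length] at h3
        rw [hL]
        exact h3
-- ## equality and extraction at the level of QEquiv
theorem QEquiv_of_triple {A : Type} [DecidableEq A] {u v : List (A ⊕ A)}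
    (h1 : npr u = npr v) (h2 : ppr u = ppr v) (h3 : dval A u = dval A v) :
    QEquiv A u v := by
  intro q
  cases q with
  | none => rw [qact_none, qact_none]
  | some q => rw [qact_eq, qact_eq, h1, h2, h3]

theorem comm_of_QEquiv {A : Type} [DecidableEq A] {u v : List (A ⊕ A)}
    (h : QEquiv A (u ++ v) (v ++ u)) :
    npr u ++ npr v = npr v ++ npr u ∧ ppr u ++ ppr v = ppr v ++ ppr u := by
  have h0 := h (some (npr (u ++ v)))
  rw [qact_eq, qact_eq] at h0
  have hc1 : dval A (u ++ v) ≤ (npr (u ++ v)).length ∧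
      npr (u ++ v) = (npr (u ++ v) ++ ppr (u ++ v)).take (npr (u ++ v)).length := by
    refine ⟨dval_le_npr A _, ?_⟩
    rw [List.take_append_of_le_length le_rfl, List.take_length]
  rw [stdAct.eq_1, if_pos hc1, List.drop_append_of_le_length le_rfl, List.drop_length,
    List.nil_append] at h0
  -- now the other side must also be defined
  rw [stdAct.eq_1] at h0
  by_cases hc2 : dval A (v ++ u) ≤ (npr (u ++ v)).length ∧
      npr (v ++ u) = (npr (u ++ v) ++ ppr (v ++ u)).take (npr (v ++ u)).length
  · rw [if_pos hc2] at h0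
    have hout : ppr (u ++ v) = (npr (u ++ v) ++ ppr (v ++ u)).drop (npr (v ++ u)).length :=
      Option.some.inj h0
    have hkey : npr (v ++ u) ++ ppr (u ++ v) = npr (u ++ v) ++ ppr (v ++ u) := by
      conv_rhs => rw [← List.take_append_drop (npr (v ++ u)).length (npr (u ++ v) ++ ppr (v ++ u))]
      rw [← hc2.2, ← hout]
    have hlen : (npr (v ++ u)).length = (npr (u ++ v)).length := by
      rw [npr_append, npr_append, List.length_append, List.length_append]
      omega
    have := List.append_inj hkey hlen
    rw [npr_append, npr_append, ppr_append, ppr_append] at this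
    exact ⟨this.1.symm, this.2⟩
  · rw [if_neg hc2] at h0
    exact absurd h0 (by simp)

-- ## dval computations
lemma dAux_eq_zero (A : Type) :
    ∀ (u : List (A ⊕ A)) (W R : ℕ), R + (npr u).length ≤ W → dAux A W R u = 0 := by
  intro u
  induction u with
  | nil => intro W R _; rfl
  | cons e u ih =>
    intro W R hWR
    cases e with
    | inl x =>
      rw [npr_cons_inl] at hWR
      exact ih (W + 1) R (by omega)
    | inr x =>
      rw [npr_cons_inr, List.length_cons] at hWR
      show max (R + 1 - W) (dAux A W (R + 1) u) = 0
      rw [ih W (R + 1) (by omega)]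
      omega

lemma dval_write_prefix (A : Type) (p u : List (A ⊕ A)) (hp : npr p = [])
    (hlen : (npr u).length ≤ (ppr p).length) : dval A (p ++ u) = 0 := by
  rw [dval_append]
  have h1 : dval A p = 0 := by
    have := dval_le_npr A p
    rw [hp] at this
    simpa using this
  have h2 : dAux A (ppr p).length (npr p).length u = 0 := by
    apply dAux_eq_zero
    rw [hp]
    simpa using hlen
  rw [h1, h2]
  rfl

lemma dAux_reads (A : Type) :
    ∀ (v : List (A ⊕ A)) (W R : ℕ), ppr v = [] → v ≠ [] →
      dAux A W R v = R + v.length - W := by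
  intro v
  induction v with
  | nil => intro W R _ hne; exact absurd rfl hne
  | cons e v ih =>
    intro W R hppr _
    cases e with
    | inl x => exact absurd hppr (by rw [ppr_cons_inl]; simp)
    | inr x =>
      rw [ppr_cons_inr] at hppr
      show max (R + 1 - W) (dAux A W (R + 1) v) = R + (v.length + 1) - W
      rcases eq_or_ne v [] with rfl | hv
      · show max (R + 1 - W) 0 = R + ([] : List (A ⊕ A)).length + 1 - W
        simp
      · rw [ih W (R + 1) hppr hv]
        omega

lemma dval_read_suffix (A : Type) (u v : List (A ⊕ A)) (hv : ppr v = []) (hvne : v ≠ [])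
    (hbig : dval A u + (ppr u).length ≤ v.length) :
    dval A (u ++ v) = (npr u).length + v.length - (ppr u).length := by
  rw [dval_append, dAux_reads A v _ _ hv hvne]
  omega
-- ## monoid level glue
def mkQ {A : Type} [DecidableEq A] (l : List (A ⊕ A)) : QueueMonoid A :=
  (queueCon A).mk' (FreeMonoid.ofList l)

def mkT {Γ : Type} (I : Γ → Γ → Prop) (l : List Γ) : TraceMonoid I :=
  (traceCon I).mk' (FreeMonoid.ofList l)

lemma mkQ_append {A : Type} [DecidableEq A] (u v : List (A ⊕ A)) :
    mkQ (u ++ v) = mkQ u * mkQ v := by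
  unfold mkQ
  rw [FreeMonoid.ofList_append, map_mul]

lemma mkQ_lpow {A : Type} [DecidableEq A] (u : List (A ⊕ A)) (n : ℕ) :
    mkQ (lpow u n) = (mkQ u) ^ n := by
  induction n with
  | zero => show mkQ [] = _; rw [pow_zero]; exact map_one _
  | succ n ih => rw [lpow, mkQ_append, ih, pow_succ']

lemma mkT_append {Γ : Type} (I : Γ → Γ → Prop) (u v : List Γ) :
    mkT I (u ++ v) = mkT I u * mkT I v := by
  unfold mkT
  rw [FreeMonoid.ofList_append, map_mul]

lemma mkT_lpow {Γ : Type} (I : Γ → Γ → Prop) (u : List Γ) (n : ℕ) :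
    mkT I (lpow u n) = (mkT I u) ^ n := by
  induction n with
  | zero => show mkT I [] = _; rw [pow_zero]; exact map_one _
  | succ n ih => rw [lpow, mkT_append, ih, pow_succ']

lemma mkQ_eq_iff {A : Type} [DecidableEq A] (u v : List (A ⊕ A)) :
    mkQ u = mkQ v ↔ QEquiv A u v := by
  show ((FreeMonoid.ofList u : FreeMonoid (A ⊕ A)) : (queueCon A).Quotient) =
    ((FreeMonoid.ofList v : FreeMonoid (A ⊕ A)) : (queueCon A).Quotient) ↔ _
  rw [Con.eq]
  exact Iff.rfl

lemma mkT_comm {Γ : Type} {I : Γ → Γ → Prop} {b c : Γ} (h : I b c) :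
    mkT I [b, c] = mkT I [c, b] := by
  show ((FreeMonoid.ofList [b, c] : FreeMonoid Γ) : (traceCon I).Quotient) =
    ((FreeMonoid.ofList [c, b] : FreeMonoid Γ) : (traceCon I).Quotient)
  rw [Con.eq]
  exact ConGen.Rel.of _ _ ⟨b, c, h, rfl, rfl⟩

lemma toList_pow {α : Type} (m : FreeMonoid α) (n : ℕ) :
    FreeMonoid.toList (m ^ n) = lpow (FreeMonoid.toList m) n := by
  induction n with
  | zero => rfl
  | succ n ih => rw [pow_succ', FreeMonoid.toList_mul, ih]; rfl

lemma lpow_ne_nil {α : Type} {l : List α} (hl : l ≠ []) {n : ℕ} (hn : n ≠ 0) :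
    lpow l n ≠ [] := by
  obtain ⟨k, rfl⟩ : ∃ k, n = k + 1 := ⟨n - 1, by omega⟩
  show l ++ lpow l k ≠ []
  simp [hl]

-- the distinguishing homomorphism
lemma exists_psi {Γ : Type} (I : Γ → Γ → Prop) (hirr : ∀ z, ¬ I z z)
    (hsym : ∀ e f, I e f → I f e) (a b : Γ) (hab : ¬ I a b) (hba : b ≠ a) :
    ∃ ψ : TraceMonoid I →* FreeMonoid Bool,
      ψ (mkT I [a]) = FreeMonoid.of true ∧ ψ (mkT I [b]) = FreeMonoid.of false ∧
      ∀ z, z ≠ a → z ≠ b → ψ (mkT I [z]) = 1 := by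
  classical
  set g : Γ → FreeMonoid Bool := fun z =>
    if z = a then FreeMonoid.of true else if z = b then FreeMonoid.of false else 1 with hg
  have hker : traceCon I ≤ Con.ker (FreeMonoid.lift g) := by
    apply Con.conGen_le.2
    rintro x y ⟨e, f, hef, rfl, rfl⟩
    rw [Con.ker_rel, map_mul, map_mul, FreeMonoid.lift_eval_of, FreeMonoid.lift_eval_of]
    by_cases hea : e = a
    · subst hea
      have hfa : f ≠ e := by rintro rfl; exact hirr f hef
      have hfb : f ≠ b := by rintro rfl; exact hab hef
      have : g f = 1 := by rw [hg]; simp [hfa, hfb]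
      rw [this, mul_one, one_mul]
    · by_cases hfa : f = a
      · subst hfa
        have heb : e ≠ b := by rintro rfl; exact hab (hsym _ _ hef)
        have : g e = 1 := by rw [hg]; simp [hea, heb]
        rw [this, mul_one, one_mul]
      · by_cases hfb : f = b
        · by_cases heb : e = b
          · rw [heb, hfb]
          · have : g e = 1 := by rw [hg]; simp [hea, heb]
            rw [this, mul_one, one_mul]
        · have : g f = 1 := by rw [hg]; simp [hfa, hfb]
          rw [this, mul_one, one_mul]
  refine ⟨(traceCon I).lift (FreeMonoid.lift g) hker, ?_, ?_, ?_⟩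
  · show (traceCon I).lift (FreeMonoid.lift g) hker ((traceCon I).mk' (FreeMonoid.ofList [a])) = _
    rw [Con.lift_mk', FreeMonoid.ofList_singleton, FreeMonoid.lift_eval_of]
    rw [hg]; simp
  · show (traceCon I).lift (FreeMonoid.lift g) hker ((traceCon I).mk' (FreeMonoid.ofList [b])) = _
    rw [Con.lift_mk', FreeMonoid.ofList_singleton, FreeMonoid.lift_eval_of]
    rw [hg]; simp [hba]
  · intro z hza hzb
    show (traceCon I).lift (FreeMonoid.lift g) hker ((traceCon I).mk' (FreeMonoid.ofList [z])) = _
    rw [Con.lift_mk', FreeMonoid.ofList_singleton, FreeMonoid.lift_eval_of]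
    rw [hg]; simp [hza, hzb]

lemma collide {Γ A : Type} [DecidableEq A] {I : Γ → Γ → Prop}
    (η : TraceMonoid I →* QueueMonoid A) (hη : Function.Injective η)
    {T1 T2 : List Γ} {L1 L2 : List (A ⊕ A)}
    (h1 : η (mkT I T1) = mkQ L1) (h2 : η (mkT I T2) = mkQ L2)
    (hq : QEquiv A L1 L2) (hne : mkT I T1 ≠ mkT I T2) : False := by
  apply hne
  apply hη
  rw [h1, h2]
  exact (mkQ_eq_iff _ _).2 hq

lemma rep_ineq : ∀ N : ℕ, ∀ l : ℕ, l ≠ 0 →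
    List.replicate N true ++ (List.replicate l false ++ [true]) ≠
      List.replicate (N + 1) true ++ List.replicate l false := by
  intro N
  induction N with
  | zero =>
    intro l hl
    obtain ⟨k, rfl⟩ : ∃ k, l = k + 1 := ⟨l - 1, by omega⟩
    simp [List.replicate_succ]
  | succ N ih =>
    intro l hl h
    rw [List.replicate_succ, List.replicate_succ (n := N + 1)] at h
    rw [List.cons_append, List.cons_append] at h
    injection h with _ h'
    exact ih l hl h'

lemma rep_ineq2 (l M : ℕ) (hl : l ≠ 0) :
    List.replicate l false ++ ([true] ++ List.replicate M true) ≠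
      [true] ++ (List.replicate l false ++ List.replicate M true) := by
  obtain ⟨k, rfl⟩ : ∃ k, l = k + 1 := ⟨l - 1, by omega⟩
  simp [List.replicate_succ]
/-- If `η` embeds the trace monoid into the queue monoid, `a ∈ Γ₊ ∪ Γ₋`, and
`(b, c) ∈ I`, then `(a, b) ∈ I` or `(a, c) ∈ I`. -/
theorem stmt16 (Γ A : Type) [DecidableEq A] (I : Γ → Γ → Prop)
    (hirr : ∀ a, ¬ I a a) (hsym : ∀ a b, I a b → I b a)
    (η : TraceMonoid I →* QueueMonoid A) (hη : Function.Injective η)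
    (a : Γ) (ha : GammaPlus I η a ∨ GammaMinus I η a)
    (b c : Γ) (hbc : I b c) :
    I a b ∨ I a c := by
  by_contra hcon
  push_neg at hcon
  obtain ⟨hab, hac⟩ := hcon
  have hne_ab : a ≠ b := by intro h; subst h; exact hac hbc
  have hne_ac : a ≠ c := by intro h; subst h; exact hab (hsym _ _ hbc)
  have hne_bc : b ≠ c := by intro h; subst h; exact hirr b hbc
  -- representatives of η(b), η(c)
  obtain ⟨vb, hvb⟩ := Con.mk'_surjective (η (mkT I [b]))
  obtain ⟨vc, hvc⟩ := Con.mk'_surjective (η (mkT I [c]))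
  have hwb : mkQ (FreeMonoid.toList vb) = η (mkT I [b]) := by
    unfold mkQ; rw [FreeMonoid.ofList_toList]; exact hvb
  have hwc : mkQ (FreeMonoid.toList vc) = η (mkT I [c]) := by
    unfold mkQ; rw [FreeMonoid.ofList_toList]; exact hvc
  set wb := FreeMonoid.toList vb
  set wc := FreeMonoid.toList vc
  clear hvb hvc
  -- commutation facts
  have hbccomm : QEquiv A (wb ++ wc) (wc ++ wb) := by
    rw [← mkQ_eq_iff]
    rw [mkQ_append, mkQ_append, hwb, hwc, ← map_mul, ← map_mul, ← mkT_append, ← mkT_append]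
    exact congrArg η (mkT_comm hbc)
  obtain ⟨hr, hs⟩ := comm_of_QEquiv hbccomm
  rcases ha with ⟨wa, hwa0, hx, hxn⟩ | ⟨wa, hwa0, hxn, hx⟩
  · -- Γ₊ : ppr wa ≠ [], npr wa = []
    have hwa : mkQ wa = η (mkT I [a]) := hwa0
    have hxlen : 0 < (ppr wa).length := List.length_pos_iff.2 hx
    by_cases hb0 : ppr wb = []
    · -- collision  a^{N+1} b  ~  a^N b a
      set N := (npr wb).length with hN
      refine collide (I := I) η hη (T1 := lpow [a] (N + 1) ++ [b])
        (T2 := lpow [a] N ++ ([b] ++ [a]))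
        (L1 := lpow wa (N + 1) ++ wb) (L2 := lpow wa N ++ (wb ++ wa)) ?_ ?_ ?_ ?_
      · simp only [mkT_append, mkT_lpow, map_mul, map_pow, mkQ_append, mkQ_lpow,
          hwa, hwb, mul_assoc]
      · simp only [mkT_append, mkT_lpow, map_mul, map_pow, mkQ_append, mkQ_lpow,
          hwa, hwb, mul_assoc]
      · apply QEquiv_of_triple
        · simp [npr_append, npr_lpow, hxn, lpow_nil]
        · simp only [ppr_append, ppr_lpow, hb0, lpow_succ']
          simp
        · have hmul : N + 1 ≤ (N + 1) * (ppr wa).length := Nat.le_mul_of_pos_right _ hxlen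
          have hmul2 : N ≤ N * (ppr wa).length := Nat.le_mul_of_pos_right _ hxlen
          rw [dval_write_prefix A _ _ (by simp [npr_lpow, hxn, lpow_nil])
              (by simp only [ppr_lpow, lpow_length]; omega),
            dval_write_prefix A _ _ (by simp [npr_lpow, hxn, lpow_nil])
              (by simp only [npr_append, hxn, ppr_lpow, lpow_length, List.append_nil]; omega)]
      · intro hEq
        obtain ⟨ψ, hψa, hψb, hψz⟩ := exists_psi I hirr hsym a b hab hne_ab.symm
        have h2 := congrArg ψ hEq
        simp only [mkT_append, mkT_lpow, map_mul, map_pow, hψa, hψb] at h2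
        have h3 := congrArg FreeMonoid.toList h2
        simp only [FreeMonoid.toList_mul, toList_pow, FreeMonoid.toList_of,
          lpow_replicate] at h3
        exact rep_ineq N 1 one_ne_zero (by simpa [List.replicate_one] using h3.symm)
    · by_cases hc0 : ppr wc = []
      · -- collision  a^{N+1} c  ~  a^N c a
        set N := (npr wc).length with hN
        refine collide (I := I) η hη (T1 := lpow [a] (N + 1) ++ [c])
          (T2 := lpow [a] N ++ ([c] ++ [a]))
          (L1 := lpow wa (N + 1) ++ wc) (L2 := lpow wa N ++ (wc ++ wa)) ?_ ?_ ?_ ?_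
        · simp only [mkT_append, mkT_lpow, map_mul, map_pow, mkQ_append, mkQ_lpow,
            hwa, hwc, mul_assoc]
        · simp only [mkT_append, mkT_lpow, map_mul, map_pow, mkQ_append, mkQ_lpow,
            hwa, hwc, mul_assoc]
        · apply QEquiv_of_triple
          · simp [npr_append, npr_lpow, hxn, lpow_nil]
          · simp only [ppr_append, ppr_lpow, hc0, lpow_succ']
            simp
          · have hmul : N + 1 ≤ (N + 1) * (ppr wa).length := Nat.le_mul_of_pos_right _ hxlen
            have hmul2 : N ≤ N * (ppr wa).length := Nat.le_mul_of_pos_right _ hxlen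
            rw [dval_write_prefix A _ _ (by simp [npr_lpow, hxn, lpow_nil])
                (by simp only [ppr_lpow, lpow_length]; omega),
              dval_write_prefix A _ _ (by simp [npr_lpow, hxn, lpow_nil])
                (by simp only [npr_append, hxn, ppr_lpow, lpow_length, List.append_nil]; omega)]
        · intro hEq
          obtain ⟨ψ, hψa, hψc, hψz⟩ := exists_psi I hirr hsym a c hac hne_ac.symm
          have h2 := congrArg ψ hEq
          simp only [mkT_append, mkT_lpow, map_mul, map_pow, hψa, hψc] at h2
          have h3 := congrArg FreeMonoid.toList h2
          simp only [FreeMonoid.toList_mul, toList_pow, FreeMonoid.toList_of,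
            lpow_replicate] at h3
          exact rep_ineq N 1 one_ne_zero (by simpa [List.replicate_one] using h3.symm)
      · -- main case : both write projections nonempty
        have hl0 : (ppr wc).length ≠ 0 := by simpa using hc0
        set K := (ppr wc).length * (npr wb).length + (ppr wb).length * (npr wc).length with hK
        refine collide (I := I) η hη
          (T1 := lpow [a] K ++ (lpow [b] (ppr wc).length ++ ([a] ++ lpow [c] (ppr wb).length)))
          (T2 := lpow [a] K ++ (lpow [c] (ppr wb).length ++ ([a] ++ lpow [b] (ppr wc).length)))
          (L1 := lpow wa K ++ (lpow wb (ppr wc).length ++ (wa ++ lpow wc (ppr wb).length)))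
          (L2 := lpow wa K ++ (lpow wc (ppr wb).length ++ (wa ++ lpow wb (ppr wc).length)))
          ?_ ?_ ?_ ?_
        · simp only [mkT_append, mkT_lpow, map_mul, map_pow, mkQ_append, mkQ_lpow,
            hwa, hwb, hwc, mul_assoc]
        · simp only [mkT_append, mkT_lpow, map_mul, map_pow, mkQ_append, mkQ_lpow,
            hwa, hwb, hwc, mul_assoc]
        · apply QEquiv_of_triple
          · simp only [npr_append, npr_lpow, hxn, lpow_nil, List.nil_append, List.append_nil]
            exact lpow_comm hr _ _
          · simp only [ppr_append, ppr_lpow]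
            rw [comm_lpow_length hs]
          · have hmul : K ≤ K * (ppr wa).length := Nat.le_mul_of_pos_right _ hxlen
            rw [dval_write_prefix A _ _ (by simp [npr_lpow, hxn, lpow_nil])
                (by simp only [npr_append, npr_lpow, hxn, lpow_nil, lpow_length,
                      List.length_append, List.nil_append, List.append_nil, List.length_nil,
                      ppr_lpow]
                    omega),
              dval_write_prefix A _ _ (by simp [npr_lpow, hxn, lpow_nil])
                (by simp only [npr_append, npr_lpow, hxn, lpow_nil, lpow_length,
                      List.length_append, List.nil_append, List.append_nil, List.length_nil,
                      ppr_lpow]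
                    omega)]
        · intro hEq
          obtain ⟨ψ, hψa, hψb, hψz⟩ := exists_psi I hirr hsym a b hab hne_ab.symm
          have hψc : ψ (mkT I [c]) = 1 := hψz c hne_ac.symm hne_bc.symm
          have h2 := congrArg ψ hEq
          simp only [mkT_append, mkT_lpow, map_mul, map_pow, hψa, hψb, hψc, one_pow,
            one_mul, mul_one] at h2
          have h3 := congrArg FreeMonoid.toList h2
          simp only [FreeMonoid.toList_mul, toList_pow, FreeMonoid.toList_of,
            lpow_replicate] at h3
          refine rep_ineq K (ppr wc).length hl0 ?_
          rw [List.replicate_succ', List.append_assoc]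
          exact h3
  · -- Γ₋ : ppr wa = [], npr wa ≠ []
    have hwa : mkQ wa = η (mkT I [a]) := hwa0
    have hwane : wa ≠ [] := by intro h; apply hx; rw [h]; rfl
    have hwalen : 0 < wa.length := List.length_pos_iff.2 hwane
    by_cases hb0 : npr wb = []
    · -- collision  (ab)a^M ~ (ba)a^M
      set M := dval A (wa ++ wb) + dval A (wb ++ wa) + (ppr (wa ++ wb)).length + 1 with hM
      have hvppr : ppr (lpow wa M) = [] := by simp [ppr_lpow, hxn, lpow_nil]
      have hvne : lpow wa M ≠ [] := lpow_ne_nil hwane (by omega)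
      have hvlen : M ≤ (lpow wa M).length := by
        rw [lpow_length]; exact Nat.le_mul_of_pos_right _ hwalen
      refine collide (I := I) η hη (T1 := ([a] ++ [b]) ++ lpow [a] M)
        (T2 := ([b] ++ [a]) ++ lpow [a] M)
        (L1 := (wa ++ wb) ++ lpow wa M) (L2 := (wb ++ wa) ++ lpow wa M) ?_ ?_ ?_ ?_
      · simp only [mkT_append, mkT_lpow, map_mul, map_pow, mkQ_append, mkQ_lpow,
          hwa, hwb, mul_assoc]
      · simp only [mkT_append, mkT_lpow, map_mul, map_pow, mkQ_append, mkQ_lpow,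
          hwa, hwb, mul_assoc]
      · apply QEquiv_of_triple
        · simp [npr_append, npr_lpow, hb0]
        · simp [ppr_append, ppr_lpow, hxn, lpow_nil]
        · rw [dval_read_suffix A _ _ hvppr hvne (by omega),
            dval_read_suffix A _ _ hvppr hvne
              (by have : (ppr (wb ++ wa)).length = (ppr (wa ++ wb)).length := by
                    simp [ppr_append, List.length_append]; omega
                  omega)]
          simp only [npr_append, ppr_append, List.length_append, hb0, hxn, List.length_nil]
          omega
      · intro hEq
        obtain ⟨ψ, hψa, hψb, hψz⟩ := exists_psi I hirr hsym a b hab hne_ab.symm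
        have h2 := congrArg ψ hEq
        simp only [mkT_append, mkT_lpow, map_mul, map_pow, hψa, hψb] at h2
        have h3 := congrArg FreeMonoid.toList h2
        simp only [FreeMonoid.toList_mul, toList_pow, FreeMonoid.toList_of,
          lpow_replicate] at h3
        simp at h3
    · by_cases hc0 : npr wc = []
      · -- collision  (ac)a^M ~ (ca)a^M
        set M := dval A (wa ++ wc) + dval A (wc ++ wa) + (ppr (wa ++ wc)).length + 1 with hM
        have hvppr : ppr (lpow wa M) = [] := by simp [ppr_lpow, hxn, lpow_nil]
        have hvne : lpow wa M ≠ [] := lpow_ne_nil hwane (by omega)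
        have hvlen : M ≤ (lpow wa M).length := by
          rw [lpow_length]; exact Nat.le_mul_of_pos_right _ hwalen
        refine collide (I := I) η hη (T1 := ([a] ++ [c]) ++ lpow [a] M)
          (T2 := ([c] ++ [a]) ++ lpow [a] M)
          (L1 := (wa ++ wc) ++ lpow wa M) (L2 := (wc ++ wa) ++ lpow wa M) ?_ ?_ ?_ ?_
        · simp only [mkT_append, mkT_lpow, map_mul, map_pow, mkQ_append, mkQ_lpow,
            hwa, hwc, mul_assoc]
        · simp only [mkT_append, mkT_lpow, map_mul, map_pow, mkQ_append, mkQ_lpow,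
            hwa, hwc, mul_assoc]
        · apply QEquiv_of_triple
          · simp [npr_append, npr_lpow, hc0]
          · simp [ppr_append, ppr_lpow, hxn, lpow_nil]
          · rw [dval_read_suffix A _ _ hvppr hvne (by omega),
              dval_read_suffix A _ _ hvppr hvne
                (by have : (ppr (wc ++ wa)).length = (ppr (wa ++ wc)).length := by
                      simp [ppr_append, List.length_append]; omega
                    omega)]
            simp only [npr_append, ppr_append, List.length_append, hc0, hxn, List.length_nil]
            omega
        · intro hEq
          obtain ⟨ψ, hψa, hψc, hψz⟩ := exists_psi I hirr hsym a c hac hne_ac.symm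
          have h2 := congrArg ψ hEq
          simp only [mkT_append, mkT_lpow, map_mul, map_pow, hψa, hψc] at h2
          have h3 := congrArg FreeMonoid.toList h2
          simp only [FreeMonoid.toList_mul, toList_pow, FreeMonoid.toList_of,
            lpow_replicate] at h3
          simp at h3
      · -- main case : both read projections nonempty
        have hl0 : (npr wc).length ≠ 0 := by simpa using hc0
        set Q1 := lpow wb (npr wc).length ++ (wa ++ lpow wc (npr wb).length) with hQ1
        set Q2 := lpow wc (npr wb).length ++ (wa ++ lpow wb (npr wc).length) with hQ2
        set M := dval A Q1 + dval A Q2 + (ppr Q1).length + 1 with hM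
        have hvppr : ppr (lpow wa M) = [] := by simp [ppr_lpow, hxn, lpow_nil]
        have hvne : lpow wa M ≠ [] := lpow_ne_nil hwane (by omega)
        have hvlen : M ≤ (lpow wa M).length := by
          rw [lpow_length]; exact Nat.le_mul_of_pos_right _ hwalen
        have hpq : (ppr Q2).length = (ppr Q1).length := by
          rw [hQ1, hQ2]
          simp only [ppr_append, ppr_lpow, List.length_append, lpow_length]
          omega
        refine collide (I := I) η hη
          (T1 := (lpow [b] (npr wc).length ++ ([a] ++ lpow [c] (npr wb).length)) ++ lpow [a] M)
          (T2 := (lpow [c] (npr wb).length ++ ([a] ++ lpow [b] (npr wc).length)) ++ lpow [a] M)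
          (L1 := Q1 ++ lpow wa M) (L2 := Q2 ++ lpow wa M) ?_ ?_ ?_ ?_
        · rw [hQ1]
          simp only [mkT_append, mkT_lpow, map_mul, map_pow, mkQ_append, mkQ_lpow,
            hwa, hwb, hwc, mul_assoc]
        · rw [hQ2]
          simp only [mkT_append, mkT_lpow, map_mul, map_pow, mkQ_append, mkQ_lpow,
            hwa, hwb, hwc, mul_assoc]
        · have hnq : npr Q1 = npr Q2 := by
            rw [hQ1, hQ2]
            simp only [npr_append, npr_lpow]
            rw [comm_lpow_length hr]
          apply QEquiv_of_triple
          · show npr (Q1 ++ lpow wa M) = npr (Q2 ++ lpow wa M)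
            rw [npr_append Q1, npr_append Q2, hnq]
          · show ppr (Q1 ++ lpow wa M) = ppr (Q2 ++ lpow wa M)
            rw [ppr_append Q1, ppr_append Q2, hQ1, hQ2]
            simp only [ppr_append, ppr_lpow, hxn, List.nil_append, List.append_nil]
            rw [lpow_comm hs]
          · rw [dval_read_suffix A _ _ hvppr hvne (by omega),
              dval_read_suffix A _ _ hvppr hvne (by omega)]
            rw [hnq, hpq]
        · intro hEq
          obtain ⟨ψ, hψa, hψb, hψz⟩ := exists_psi I hirr hsym a b hab hne_ab.symm
          have hψc : ψ (mkT I [c]) = 1 := hψz c hne_ac.symm hne_bc.symm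
          have h2 := congrArg ψ hEq
          simp only [mkT_append, mkT_lpow, map_mul, map_pow, hψa, hψb, hψc, one_pow,
            one_mul, mul_one] at h2
          have h3 := congrArg FreeMonoid.toList h2
          simp only [FreeMonoid.toList_mul, toList_pow, FreeMonoid.toList_of,
            lpow_replicate] at h3
          obtain ⟨k, hk⟩ : ∃ k, (npr wc).length = k + 1 := ⟨(npr wc).length - 1, by omega⟩
          rw [hk, List.replicate_succ] at h3
          simp at h3
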